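/- Theorem 1, case B⁺₁,₌,<: Assume there exist a > 0, τ > 0 and continuously differentiable functions bᵤ, bₗ : [0,a] → ℝ with bᵤ(0) = bₗ(0) = 0, bᵤ'(0) = 0 and bᵤ convex on [0,a], bₗ'(x) ≤ −τ for all x ∈ [0,a], such that (x, bᵤ(x)) ∈ Ĝ and (x, bₗ(x)) ∈ Ĝ for every x ∈ (0,a], the boundary condition (5⁺ᵤ) holds: f₀(x, bᵤ(x)) ≤ bᵤ'(x) for all x ∈ (0,a], and there exists c ∈ (0,a] such that every point (x,y) with 0 < x ≤ c and bₗ(x) < y < bᵤ(x) belongs to G. Then there exist h ∈ (0,c] and a function φ : [0,h] → ℝ with φ(0) = 0 which is a solution of y' = f₀(x,y) with graph in G̃ on [0,h]. -/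

import Mathlib

open Set Filter Topology


/-- Comparison: a solution of the smaller field stays below a solution of a larger
Lipschitz field, if they start at the same value. -/
theorem ode_comparison {v w : ℝ × ℝ → ℝ} {K : NNReal} (hw : LipschitzWith K w)
    (hvw : ∀ p, v p ≤ w p) {φ ψ : ℝ → ℝ} {h : ℝ}
    (hφ : ∀ t ∈ Icc (0:ℝ) h, HasDerivWithinAt φ (v (t, φ t)) (Icc (0:ℝ) h) t)
    (hψ : ∀ t ∈ Icc (0:ℝ) h, HasDerivWithinAt ψ (w (t, ψ t)) (Icc (0:ℝ) h) t)
    (h00 : φ 0 = ψ 0) :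
    ∀ t ∈ Icc (0:ℝ) h, φ t ≤ ψ t := by
  intro x₁ hx₁
  by_contra hgt
  push_neg at hgt
  have hφc : ContinuousOn φ (Icc (0:ℝ) h) := fun t ht => (hφ t ht).continuousWithinAt
  have hψc : ContinuousOn ψ (Icc (0:ℝ) h) := fun t ht => (hψ t ht).continuousWithinAt
  set f : ℝ → ℝ := fun t => φ t - ψ t with hf
  have hfc : ContinuousOn f (Icc (0:ℝ) h) := hφc.sub hψc
  set A : Set ℝ := {t ∈ Icc (0:ℝ) x₁ | f t ≤ 0} with hA
  have hsub : Icc (0:ℝ) x₁ ⊆ Icc (0:ℝ) h := Icc_subset_Icc le_rfl hx₁.2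
  have hAc : IsClosed A := by
    have : A = Icc (0:ℝ) x₁ ∩ f ⁻¹' (Iic 0) := rfl
    rw [this]
    exact (hfc.mono hsub).preimage_isClosed_of_isClosed isClosed_Icc isClosed_Iic
  have h0A : (0:ℝ) ∈ A := ⟨⟨le_rfl, hx₁.1⟩, by simp [hf, h00]⟩
  have hAcomp : IsCompact A := isCompact_Icc.of_isClosed_subset hAc (fun t ht => ht.1)
  set s := sSup A with hs
  have hsA : s ∈ A := hAcomp.sSup_mem ⟨0, h0A⟩
  have hsx₁ : s < x₁ := by
    rcases lt_or_eq_of_le hsA.1.2 with hlt | heq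
    · exact hlt
    · exfalso; have := hsA.2; rw [heq] at this; simp [hf] at this; linarith
  have hs0 : (0:ℝ) ≤ s := hsA.1.1
  have hpos : ∀ t ∈ Ioc s x₁, 0 < f t := by
    intro t ht
    by_contra hle
    push_neg at hle
    have : t ∈ A := ⟨⟨hs0.trans ht.1.le, ht.2⟩, hle⟩
    exact absurd (le_csSup hAcomp.bddAbove this) (not_le.mpr ht.1)
  -- f s = 0
  have hfs_le : f s ≤ 0 := hsA.2
  have hfs_ge : 0 ≤ f s := by
    have hne : (𝓝[Ioc s x₁] s).NeBot := by
      apply mem_closure_iff_nhdsWithin_neBot.mp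
      rw [closure_Ioc hsx₁.ne]
      exact ⟨le_rfl, hsx₁.le⟩
    have htd : Tendsto f (𝓝[Ioc s x₁] s) (𝓝 (f s)) :=
      ((hfc s (hsub hsA.1)).mono (Ioc_subset_Icc_self.trans
        (Icc_subset_Icc hs0 hx₁.2))).tendsto
    exact ge_of_tendsto htd (eventually_mem_nhdsWithin.mono (fun t ht => (hpos t ht).le))
  have hfs : f s = 0 := le_antisymm hfs_le hfs_ge
  -- Gronwall on [s, x₁]
  have key : ∀ t ∈ Icc s x₁, f t ≤ gronwallBound 0 K 0 (t - s) := by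
    apply le_gronwallBound_of_liminf_deriv_right_le (f' := fun t => v (t, φ t) - w (t, ψ t))
    · exact hfc.mono (Icc_subset_Icc hs0 hx₁.2)
    · intro t ht r hr
      have htIcc : t ∈ Icc (0:ℝ) h := ⟨hs0.trans ht.1, (ht.2.le.trans hx₁.2)⟩
      have hth : t < h := lt_of_lt_of_le ht.2 hx₁.2
      have hmem : Icc (0:ℝ) h ∈ 𝓝[Ici t] t := by
        have h1 : Ici t ∩ Iic h ∈ 𝓝[Ici t] t :=
          inter_mem_nhdsWithin _ (Iic_mem_nhds hth)
        exact mem_of_superset h1 (fun u hu => ⟨htIcc.1.trans hu.1, hu.2⟩)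
      have hd : HasDerivWithinAt f (v (t, φ t) - w (t, ψ t)) (Ici t) t :=
        ((hφ t htIcc).sub (hψ t htIcc)).mono_of_mem_nhdsWithin hmem
      exact hd.liminf_right_slope_le hr
    · simp [hfs]
    · intro t ht
      have hft : 0 ≤ f t := by
        rcases eq_or_lt_of_le ht.1 with rfl | hlt
        · exact hfs_ge
        · exact (hpos t ⟨hlt, ht.2.le⟩).le
      have h1 : v (t, φ t) ≤ w (t, φ t) := hvw _
      have h2 : w (t, φ t) - w (t, ψ t) ≤ K * (φ t - ψ t) := by
        have := hw.dist_le_mul (t, φ t) (t, ψ t)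
        rw [Prod.dist_eq] at this
        simp only [dist_self, Real.dist_eq] at this
        have hmax : max 0 |φ t - ψ t| = |φ t - ψ t| := max_eq_right (abs_nonneg _)
        rw [hmax] at this
        calc w (t, φ t) - w (t, ψ t) ≤ |w (t, φ t) - w (t, ψ t)| := le_abs_self _
          _ ≤ K * |φ t - ψ t| := this
          _ = K * (φ t - ψ t) := by rw [abs_of_nonneg hft]
      show v (t, φ t) - w (t, ψ t) ≤ K * (φ t - ψ t) + 0
      linarith
  have := key x₁ ⟨hsx₁.le, le_rfl⟩
  rw [gronwallBound_ε0, zero_mul] at this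
  simp only [hf] at this
  linarith

/-- Barrier lemma: if `f 0 ≤ 0` and `f' t ≤ 0` whenever `f t ≥ 0` (in the interior),
then `f ≤ 0` on `[0, h]`. -/
theorem barrier_le {f f' : ℝ → ℝ} {h : ℝ}
    (hfc : ContinuousOn f (Icc (0:ℝ) h))
    (hf' : ∀ t ∈ Ioo (0:ℝ) h, HasDerivAt f (f' t) t)
    (h0 : f 0 ≤ 0)
    (hbound : ∀ t ∈ Ioo (0:ℝ) h, 0 ≤ f t → f' t ≤ 0) :
    ∀ t ∈ Icc (0:ℝ) h, f t ≤ 0 := by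
  intro x₁ hx₁
  by_contra hgt
  push_neg at hgt
  set A : Set ℝ := {t ∈ Icc (0:ℝ) x₁ | f t ≤ 0} with hA
  have hsub : Icc (0:ℝ) x₁ ⊆ Icc (0:ℝ) h := Icc_subset_Icc le_rfl hx₁.2
  have hAc : IsClosed A := by
    have : A = Icc (0:ℝ) x₁ ∩ f ⁻¹' (Iic 0) := rfl
    rw [this]
    exact (hfc.mono hsub).preimage_isClosed_of_isClosed isClosed_Icc isClosed_Iic
  have h0A : (0:ℝ) ∈ A := ⟨⟨le_rfl, hx₁.1⟩, h0⟩
  have hAcomp : IsCompact A := isCompact_Icc.of_isClosed_subset hAc (fun t ht => ht.1)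
  set s := sSup A with hs
  have hsA : s ∈ A := hAcomp.sSup_mem ⟨0, h0A⟩
  have hsx₁ : s < x₁ := by
    rcases lt_or_eq_of_le hsA.1.2 with hlt | heq
    · exact hlt
    · exfalso; have := hsA.2; rw [heq] at this; linarith
  have hs0 : (0:ℝ) ≤ s := hsA.1.1
  have hpos : ∀ t ∈ Ioc s x₁, 0 < f t := by
    intro t ht
    by_contra hle
    push_neg at hle
    have : t ∈ A := ⟨⟨hs0.trans ht.1.le, ht.2⟩, hle⟩
    exact absurd (le_csSup hAcomp.bddAbove this) (not_le.mpr ht.1)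
  have hanti : AntitoneOn f (Icc s x₁) := by
    apply antitoneOn_of_deriv_nonpos (convex_Icc s x₁)
    · exact hfc.mono (Icc_subset_Icc hs0 hx₁.2)
    · intro t ht
      rw [interior_Icc] at ht
      have ht' : t ∈ Ioo (0:ℝ) h := ⟨hs0.trans_lt ht.1, ht.2.trans_le hx₁.2⟩
      exact (hf' t ht').differentiableAt.differentiableWithinAt
    · intro t ht
      rw [interior_Icc] at ht
      have ht' : t ∈ Ioo (0:ℝ) h := ⟨hs0.trans_lt ht.1, ht.2.trans_le hx₁.2⟩
      rw [(hf' t ht').deriv]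
      exact hbound t ht' (hpos t ⟨ht.1, ht.2.le⟩).le
  have : f x₁ ≤ f s := hanti ⟨le_rfl, hsx₁.le⟩ ⟨hsx₁.le, le_rfl⟩ hsx₁.le
  linarith [hsA.2]

/-- Peano existence theorem on `[0, h]` for a bounded continuous field, with initial value 0. -/
theorem peano_Icc {F : ℝ × ℝ → ℝ} {M h : ℝ} (hh : 0 < h)
    (hFc : Continuous F) (hFb : ∀ p, |F p| ≤ M) :
    ∃ φ : ℝ → ℝ, φ 0 = 0 ∧ ∀ t ∈ Icc (0:ℝ) h, HasDerivWithinAt φ (F (t, φ t)) (Icc (0:ℝ) h) t := by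
  have hM : 0 ≤ M := (abs_nonneg _).trans (hFb (0, 0))
  -- McShane approximations
  set Fn : ℕ → ℝ × ℝ → ℝ := fun n p => ⨅ q : ℝ × ℝ, (F q + ((n : ℝ) + 1) * dist p q) with hFndef
  have hterm : ∀ (n : ℕ) (p q : ℝ × ℝ), -M ≤ F q + ((n : ℝ) + 1) * dist p q := by
    intro n p q
    have h1 : -M ≤ F q := neg_le_of_abs_le (hFb q)
    have h2 : 0 ≤ ((n : ℝ) + 1) * dist p q := by positivity
    linarith
  have hbdd : ∀ (n : ℕ) (p : ℝ × ℝ),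
      BddBelow (Set.range fun q => F q + ((n : ℝ) + 1) * dist p q) :=
    fun n p => ⟨-M, by rintro x ⟨q, rfl⟩; exact hterm n p q⟩
  have hFn_le : ∀ n p, Fn n p ≤ F p := by
    intro n p
    have := ciInf_le (hbdd n p) p
    simpa using this
  have hFn_geM : ∀ n p, -M ≤ Fn n p := fun n p => le_ciInf (hterm n p)
  have hFn_leM : ∀ n p, Fn n p ≤ M := fun n p => (hFn_le n p).trans (le_of_abs_le (hFb p))
  have hFn_mono : ∀ n p, Fn n p ≤ Fn (n + 1) p := by
    intro n p
    apply ciInf_mono (hbdd n p)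
    intro q
    have : ((n : ℝ) + 1) * dist p q ≤ (((n : ℕ) + 1 : ℕ) : ℝ) * dist p q + dist p q := by
      push_cast; nlinarith [dist_nonneg (x := p) (y := q)]
    push_cast
    nlinarith [dist_nonneg (x := p) (y := q)]
  have hFn_lip1 : ∀ n (p p' : ℝ × ℝ), Fn n p ≤ Fn n p' + ((n : ℝ) + 1) * dist p p' := by
    intro n p p'
    rw [← sub_le_iff_le_add]
    apply le_ciInf
    intro q
    rw [sub_le_iff_le_add]
    calc Fn n p ≤ F q + ((n : ℝ) + 1) * dist p q := ciInf_le (hbdd n p) q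
      _ ≤ F q + ((n : ℝ) + 1) * (dist p' q + dist p p') := by
          have := dist_triangle p p' q
          have h2 : (0:ℝ) ≤ (n : ℝ) + 1 := by positivity
          nlinarith [dist_triangle p p' q]
      _ = F q + ((n : ℝ) + 1) * dist p' q + ((n : ℝ) + 1) * dist p p' := by ring
  have hFn_lip : ∀ n : ℕ, LipschitzWith ((n : NNReal) + 1) (Fn n) := by
    intro n
    apply LipschitzWith.of_dist_le_mul
    intro p p'
    have hc : (((n : NNReal) + 1 : NNReal) : ℝ) = (n : ℝ) + 1 := by push_cast; ring
    rw [Real.dist_eq, hc]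
    rw [abs_sub_le_iff]
    constructor
    · have := hFn_lip1 n p p'; linarith
    · have := hFn_lip1 n p' p; rw [dist_comm p' p] at this; linarith
  have hFn_cont : ∀ n, Continuous (Fn n) := fun n => (hFn_lip n).continuous
  -- uniform convergence from below on the compact region
  set K₀ : Set (ℝ × ℝ) := Icc (0:ℝ) h ×ˢ Icc (-(M * h)) (M * h) with hK₀def
  have hK₀c : IsCompact K₀ := isCompact_Icc.prod isCompact_Icc
  set K₁ : Set (ℝ × ℝ) := Metric.cthickening 1 K₀ with hK₁def
  have hK₁c : IsCompact K₁ := hK₀c.cthickening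
  have hK₀K₁ : K₀ ⊆ K₁ := Metric.self_subset_cthickening _
  have huc : UniformContinuousOn F K₁ := hK₁c.uniformContinuousOn_of_continuous hFc.continuousOn
  have hconv : ∀ ε > (0:ℝ), ∃ N : ℕ, ∀ n ≥ N, ∀ p ∈ K₀, F p - ε ≤ Fn n p := by
    intro ε hε
    obtain ⟨δ, hδ, hδε⟩ := Metric.uniformContinuousOn_iff.mp huc ε hε
    set δ' := min δ 1 with hδ'def
    have hδ' : 0 < δ' := lt_min hδ one_pos
    obtain ⟨N, hN⟩ := exists_nat_ge (2 * M / δ')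
    refine ⟨N, fun n hn p hp => ?_⟩
    apply le_ciInf
    intro q
    by_cases hq : dist p q < δ'
    · have hqK₁ : q ∈ K₁ := Metric.mem_cthickening_of_dist_le q p 1 K₀ hp
        (by rw [dist_comm]; exact hq.le.trans (min_le_right _ _))
      have hlt := hδε p (hK₀K₁ hp) q hqK₁ (hq.trans_le (min_le_left _ _))
      rw [Real.dist_eq, abs_sub_lt_iff] at hlt
      have h2 : 0 ≤ ((n : ℝ) + 1) * dist p q := by positivity
      linarith [hlt.1]
    · push_neg at hq
      have h1 : -M ≤ F q := neg_le_of_abs_le (hFb q)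
      have h2 : F p ≤ M := le_of_abs_le (hFb p)
      have h3 : (2 * M / δ') * δ' ≤ ((n : ℝ) + 1) * dist p q := by
        have hn' : (2 * M / δ') ≤ (n : ℝ) + 1 := by
          have : (N : ℝ) ≤ (n : ℝ) := by exact_mod_cast hn
          linarith [hN]
        have : (0:ℝ) ≤ 2 * M / δ' := by positivity
        nlinarith [hδ'.le]
      rw [div_mul_cancel₀ _ (ne_of_gt hδ')] at h3
      linarith
  -- Picard-Lindelöf solutions for the approximations
  have hpic : ∀ n : ℕ, ∃ φ : ℝ → ℝ, φ 0 = 0 ∧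
      ∀ t ∈ Icc (0:ℝ) h, HasDerivWithinAt φ (Fn n (t, φ t)) (Icc (0:ℝ) h) t := by
    intro n
    have hpl : IsPicardLindelof (fun t x => Fn n (t, x)) (tmin := 0) (tmax := h) ⟨0, ⟨le_rfl, hh.le⟩⟩ 0
        ⟨M * h, by positivity⟩ 0 ⟨M, hM⟩ ((n : NNReal) + 1) :=
      { lipschitzOnWith := by
          intro t _
          have h1 : LipschitzWith (((n : NNReal) + 1) * 1) (fun x : ℝ => Fn n (t, x)) :=
            (hFn_lip n).comp (LipschitzWith.prodMk_left t)
          rw [mul_one] at h1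
          exact h1.lipschitzOnWith
        continuousOn := fun x _ =>
          ((hFn_cont n).comp (continuous_id.prodMk continuous_const)).continuousOn
        norm_le := fun t _ x _ => by
          rw [Real.norm_eq_abs, abs_le]
          exact ⟨hFn_geM n _, hFn_leM n _⟩
        mul_max_le := by
          simp only [sub_zero]
          show M * max h 0 ≤ M * h - 0
          rw [max_eq_left hh.le, sub_zero] }
    obtain ⟨φ, hφ0, hφd⟩ := hpl.exists_eq_forall_mem_Icc_hasDerivWithinAt₀
    exact ⟨φ, hφ0, hφd⟩
  choose Φ hΦ0 hΦd using hpic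
  -- a priori bounds
  have hΦlip : ∀ n : ℕ, ∀ s ∈ Icc (0:ℝ) h, ∀ t ∈ Icc (0:ℝ) h, |Φ n s - Φ n t| ≤ M * |s - t| := by
    intro n s hs t ht
    have := Convex.norm_image_sub_le_of_norm_hasDerivWithin_le (f := Φ n)
      (f' := fun t => Fn n (t, Φ n t)) (s := Icc (0:ℝ) h) (hΦd n)
      (fun t _ => by rw [Real.norm_eq_abs, abs_le]; exact ⟨hFn_geM n _, hFn_leM n _⟩)
      (convex_Icc _ _) ht hs
    simpa [Real.norm_eq_abs] using this
  have hΦb : ∀ n : ℕ, ∀ t ∈ Icc (0:ℝ) h, |Φ n t| ≤ M * t := by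
    intro n t ht
    have := hΦlip n t ht 0 ⟨le_rfl, hh.le⟩
    rw [hΦ0 n, sub_zero, sub_zero, abs_of_nonneg ht.1] at this
    exact this
  have hΦmem : ∀ n : ℕ, ∀ t ∈ Icc (0:ℝ) h, (t, Φ n t) ∈ K₀ := by
    intro n t ht
    refine ⟨ht, ?_⟩
    have h1 := hΦb n t ht
    have h2 : M * t ≤ M * h := by nlinarith [ht.2, ht.1]
    rw [abs_le] at h1
    constructor <;> simp only [mem_Icc] <;> [skip; skip] <;> nlinarith [h1.1, h1.2]
  -- monotonicity in n
  have hmono : ∀ n : ℕ, ∀ t ∈ Icc (0:ℝ) h, Φ n t ≤ Φ (n + 1) t := by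
    intro n
    exact ode_comparison (hFn_lip (n + 1)) (hFn_mono n) (hΦd n) (hΦd (n + 1))
      (by rw [hΦ0 n, hΦ0 (n + 1)])
  have hmono' : ∀ t ∈ Icc (0:ℝ) h, Monotone fun n => Φ n t :=
    fun t ht => monotone_nat_of_le_succ (fun n => hmono n t ht)
  -- the limit function
  set φ : ℝ → ℝ := fun t => ⨆ n, Φ n t with hφdef
  have htends : ∀ t ∈ Icc (0:ℝ) h, Filter.Tendsto (fun n => Φ n t) Filter.atTop (𝓝 (φ t)) := by
    intro t ht
    apply tendsto_atTop_ciSup (hmono' t ht)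
    refine ⟨M * h, ?_⟩
    rintro x ⟨n, rfl⟩
    have h1 := hΦb n t ht
    rw [abs_le] at h1
    nlinarith [ht.2, ht.1, h1.2]
  have hφ0 : φ 0 = 0 := by
    have : ∀ n, Φ n 0 = 0 := hΦ0
    simp only [hφdef]
    simp [this]
  have hφmem : ∀ t ∈ Icc (0:ℝ) h, (t, φ t) ∈ K₀ := by
    intro t ht
    have := (hK₀c.isClosed.mem_of_tendsto
      ((tendsto_const_nhds (x := t)).prodMk_nhds (htends t ht))
      (Filter.Eventually.of_forall (fun n => hΦmem n t ht)))
    exact this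
  -- continuity of φ
  have hφlip : ∀ s ∈ Icc (0:ℝ) h, ∀ t ∈ Icc (0:ℝ) h, |φ s - φ t| ≤ M * |s - t| := by
    intro s hs t ht
    have htd : Filter.Tendsto (fun n => |Φ n s - Φ n t|) Filter.atTop (𝓝 |φ s - φ t|) :=
      ((htends s hs).sub (htends t ht)).abs
    exact le_of_tendsto htd (Filter.Eventually.of_forall (fun n => hΦlip n s hs t ht))
  have hφcont : ContinuousOn φ (Icc (0:ℝ) h) := by
    intro x hx
    apply Metric.continuousWithinAt_iff.mpr
    intro ε hε
    rcases le_or_gt M 0 with hM0 | hM0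
    · refine ⟨1, one_pos, fun y hy _ => ?_⟩
      have := hφlip y hy x hx
      have habs : |φ y - φ x| ≤ 0 := this.trans (by nlinarith [abs_nonneg (y - x)])
      rw [Real.dist_eq]
      linarith [abs_nonneg (φ y - φ x), hε]
    · refine ⟨ε / M, by positivity, fun y hy hd => ?_⟩
      have := hφlip y hy x hx
      rw [Real.dist_eq] at hd ⊢
      calc |φ y - φ x| ≤ M * |y - x| := this
        _ < M * (ε / M) := by exact mul_lt_mul_of_pos_left hd hM0
        _ = ε := by field_simp
  -- integral identity for each approximation
  have hgn_cont : ∀ n : ℕ, ContinuousOn (fun t => Fn n (t, Φ n t)) (Icc (0:ℝ) h) := by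
    intro n
    exact (hFn_cont n).comp_continuousOn
      (continuousOn_id.prodMk (fun t ht => (hΦd n t ht).continuousWithinAt))
  have hInt : ∀ n : ℕ, ∀ x ∈ Icc (0:ℝ) h, Φ n x = ∫ t in (0:ℝ)..x, Fn n (t, Φ n t) := by
    intro n x hx
    have hxsub : Icc (0:ℝ) x ⊆ Icc (0:ℝ) h := Icc_subset_Icc le_rfl hx.2
    have hderiv : ∀ t ∈ Ioo (0:ℝ) x, HasDerivWithinAt (Φ n) (Fn n (t, Φ n t)) (Ioi t) t := by
      intro t ht
      have htIcc : t ∈ Icc (0:ℝ) h := ⟨ht.1.le, (ht.2.le.trans hx.2)⟩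
      apply (hΦd n t htIcc).mono_of_mem_nhdsWithin
      have h1 : Ioi t ∩ Iic h ∈ 𝓝[Ioi t] t :=
        inter_mem_nhdsWithin _ (Iic_mem_nhds (ht.2.trans_le hx.2))
      exact Filter.mem_of_superset h1 (fun u hu => ⟨ht.1.le.trans hu.1.le, hu.2⟩)
    have hint : IntervalIntegrable (fun t => Fn n (t, Φ n t)) MeasureTheory.volume 0 x :=
      ((hgn_cont n).mono hxsub).intervalIntegrable_of_Icc hx.1
    have := intervalIntegral.integral_eq_sub_of_hasDeriv_right_of_le hx.1
      (fun t ht => ((hΦd n t (hxsub ht)).continuousWithinAt).mono hxsub) hderiv hint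
    rw [this, hΦ0 n, sub_zero]
  -- passage to the limit in the integral
  have hIntlim : ∀ x ∈ Icc (0:ℝ) h, φ x = ∫ t in (0:ℝ)..x, F (t, φ t) := by
    intro x hx
    have hlim : Filter.Tendsto (fun n => ∫ t in (0:ℝ)..x, Fn n (t, Φ n t)) Filter.atTop
        (𝓝 (∫ t in (0:ℝ)..x, F (t, φ t))) := by
      apply intervalIntegral.tendsto_integral_filter_of_dominated_convergence
        (bound := fun _ => M)
      · apply Filter.Eventually.of_forall
        intro n
        apply ContinuousOn.aestronglyMeasurable _ measurableSet_uIoc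
        apply (hgn_cont n).mono
        rw [uIoc_of_le hx.1]
        exact Ioc_subset_Icc_self.trans (Icc_subset_Icc le_rfl hx.2)
      · apply Filter.Eventually.of_forall
        intro n
        apply MeasureTheory.ae_of_all
        intro t _
        rw [Real.norm_eq_abs, abs_le]
        exact ⟨hFn_geM n _, hFn_leM n _⟩
      · exact intervalIntegrable_const
      · apply MeasureTheory.ae_of_all
        intro t ht
        rw [uIoc_of_le hx.1] at ht
        have htIcc : t ∈ Icc (0:ℝ) h := ⟨ht.1.le, ht.2.trans hx.2⟩
        -- show Fn n (t, Φ n t) → F (t, φ t)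
        have hc1 : Filter.Tendsto (fun n => F (t, Φ n t)) Filter.atTop (𝓝 (F (t, φ t))) :=
          (hFc.tendsto _).comp ((tendsto_const_nhds).prodMk_nhds (htends t htIcc))
        rw [Metric.tendsto_atTop]
        intro ε hε
        obtain ⟨N₁, hN₁⟩ := hconv (ε / 2) (by positivity)
        rw [Metric.tendsto_atTop] at hc1
        obtain ⟨N₂, hN₂⟩ := hc1 (ε / 2) (by positivity)
        refine ⟨max N₁ N₂, fun n hn => ?_⟩
        have h1 := hN₁ n (le_of_max_le_left hn) (t, Φ n t) (hΦmem n t htIcc)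
        have h2 := hN₂ n (le_of_max_le_right hn)
        have h3 : Fn n (t, Φ n t) ≤ F (t, Φ n t) := hFn_le n _
        rw [Real.dist_eq] at h2 ⊢
        rw [abs_lt] at h2
        rw [abs_lt]
        constructor <;> nlinarith [h1, h3, h2.1, h2.2]
    have h2 : Filter.Tendsto (fun n => Φ n x) Filter.atTop
        (𝓝 (∫ t in (0:ℝ)..x, F (t, φ t))) := by
      apply hlim.congr
      intro n
      exact (hInt n x hx).symm
    exact tendsto_nhds_unique (htends x hx) h2
  -- the continuous extension of the integrand and FTC
  set X : ℝ → ℝ := fun t => max 0 (min t h) with hXdef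
  have hXcont : Continuous X := continuous_const.max (continuous_id.min continuous_const)
  have hXmem : ∀ t, X t ∈ Icc (0:ℝ) h := by
    intro t
    constructor
    · exact le_max_left _ _
    · exact max_le hh.le (min_le_right _ _)
  have hXid : ∀ t ∈ Icc (0:ℝ) h, X t = t := by
    intro t ht
    simp only [hXdef]
    rw [min_eq_left ht.2, max_eq_right ht.1]
  set gc : ℝ → ℝ := fun t => F (X t, φ (X t)) with hgcdef
  have hgc_cont : Continuous gc := by
    apply hFc.comp
    exact hXcont.prodMk (hφcont.comp_continuous hXcont hXmem)
  have hgc_eq : ∀ t ∈ Icc (0:ℝ) h, gc t = F (t, φ t) := by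
    intro t ht
    simp only [hgcdef, hXid t ht]
  have hΦeq : ∀ x ∈ Icc (0:ℝ) h, φ x = ∫ t in (0:ℝ)..x, gc t := by
    intro x hx
    rw [hIntlim x hx]
    apply intervalIntegral.integral_congr
    intro t ht
    rw [uIcc_of_le hx.1] at ht
    exact (hgc_eq t ⟨ht.1, ht.2.trans hx.2⟩).symm
  have hd : ∀ x : ℝ, HasDerivAt (fun u => ∫ t in (0:ℝ)..u, gc t) (gc x) x := by
    intro x
    apply intervalIntegral.integral_hasDerivAt_right (hgc_cont.intervalIntegrable 0 x)
      (hgc_cont.stronglyMeasurable.stronglyMeasurableAtFilter)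
      hgc_cont.continuousAt
  refine ⟨φ, hφ0, fun x hx => ?_⟩
  have h1 : HasDerivWithinAt (fun u => ∫ t in (0:ℝ)..u, gc t) (gc x) (Icc (0:ℝ) h) x :=
    (hd x).hasDerivWithinAt
  have h2 : HasDerivWithinAt φ (gc x) (Icc (0:ℝ) h) x :=
    h1.congr (fun y hy => hΦeq y hy) (hΦeq x hx)
  rwa [hgc_eq x hx] at h2


/-- Theorem 1, case B⁺₁,₌,<. -/
theorem theorem1_case_B1_eq_lt
    (G Ghat : Set (ℝ × ℝ)) (hGopen : IsOpen G) (hGhat : Ghat ⊆ frontier G)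
    (f₀ : ℝ × ℝ → ℝ) (hf : ContinuousOn f₀ (G ∪ Ghat))
    (hO : ((0 : ℝ), (0 : ℝ)) ∈ Ghat) (hf0 : f₀ (0, 0) = 0)
    (a τ : ℝ) (ha : 0 < a) (hτ : 0 < τ)
    (bu bu' bl bl' : ℝ → ℝ)
    (hderivu : ∀ x ∈ Icc (0 : ℝ) a, HasDerivWithinAt bu (bu' x) (Icc (0 : ℝ) a) x)
    (hbu'cont : ContinuousOn bu' (Icc (0 : ℝ) a))
    (hderivl : ∀ x ∈ Icc (0 : ℝ) a, HasDerivWithinAt bl (bl' x) (Icc (0 : ℝ) a) x)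
    (hbl'cont : ContinuousOn bl' (Icc (0 : ℝ) a))
    (hbu0 : bu 0 = 0) (hbl0 : bl 0 = 0)
    (hbu'0 : bu' 0 = 0)
    (hconv : ConvexOn ℝ (Icc (0 : ℝ) a) bu)
    (hbl'τ : ∀ x ∈ Icc (0 : ℝ) a, bl' x ≤ -τ)
    (hcurveu : ∀ x ∈ Ioc (0 : ℝ) a, (x, bu x) ∈ Ghat)
    (hcurvel : ∀ x ∈ Ioc (0 : ℝ) a, (x, bl x) ∈ Ghat)
    (hbcu : ∀ x ∈ Ioc (0 : ℝ) a, f₀ (x, bu x) ≤ bu' x)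
    (c : ℝ) (hc : c ∈ Ioc (0 : ℝ) a)
    (hin : ∀ x y : ℝ, 0 < x → x ≤ c → bl x < y → y < bu x → (x, y) ∈ G) :
    ∃ h ∈ Ioc (0 : ℝ) c, ∃ φ : ℝ → ℝ, φ 0 = 0 ∧
      ∀ x ∈ Icc (0 : ℝ) h, (x, φ x) ∈ G ∪ Ghat ∧
        HasDerivWithinAt φ (f₀ (x, φ x)) (Icc (0 : ℝ) h) x := by
  -- continuity of the barriers
  have hblc : ContinuousOn bl (Icc (0:ℝ) a) := fun t ht => (hderivl t ht).continuousWithinAt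
  have hbuc : ContinuousOn bu (Icc (0:ℝ) a) := fun t ht => (hderivu t ht).continuousWithinAt
  -- bl is nonpositive
  have hbl_anti : AntitoneOn bl (Icc (0:ℝ) a) := by
    apply antitoneOn_of_deriv_nonpos (convex_Icc _ _) hblc
    · intro t ht
      rw [interior_Icc] at ht
      exact ((hderivl t ⟨ht.1.le, ht.2.le⟩).hasDerivAt
        (Icc_mem_nhds ht.1 ht.2)).differentiableAt.differentiableWithinAt
    · intro t ht
      rw [interior_Icc] at ht
      rw [((hderivl t ⟨ht.1.le, ht.2.le⟩).hasDerivAt (Icc_mem_nhds ht.1 ht.2)).deriv]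
      linarith [hbl'τ t ⟨ht.1.le, ht.2.le⟩]
  have hbl_nonpos : ∀ x ∈ Icc (0:ℝ) a, bl x ≤ 0 := by
    intro x hx
    have := hbl_anti ⟨le_rfl, ha.le⟩ hx hx.1
    rwa [hbl0] at this
  -- bu is nonnegative (convexity + bu'(0) = 0)
  have hbu_nonneg : ∀ x ∈ Icc (0:ℝ) a, 0 ≤ bu x := by
    intro x hx
    rcases eq_or_lt_of_le hx.1 with rfl | hx0
    · rw [hbu0]
    by_contra hneg
    push_neg at hneg
    have hm : bu x / x < 0 := div_neg_of_neg_of_pos hneg hx0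
    have hder := hderivu 0 ⟨le_rfl, ha.le⟩
    rw [hbu'0] at hder
    rw [hasDerivWithinAt_iff_tendsto_slope] at hder
    haveI hnb : (𝓝[Icc (0:ℝ) a \ {0}] (0:ℝ)).NeBot := by
      apply mem_closure_iff_nhdsWithin_neBot.mp
      apply closure_mono (show Ioc (0:ℝ) a ⊆ Icc (0:ℝ) a \ {0} from
        fun t ht => ⟨⟨ht.1.le, ht.2⟩, ne_of_gt ht.1⟩)
      rw [closure_Ioc (ne_of_lt ha)]
      exact ⟨le_rfl, ha.le⟩
    have hev : ∀ᶠ t in 𝓝[Icc (0:ℝ) a \ {0}] (0:ℝ), slope bu 0 t ≤ bu x / x := by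
      have hmem : Metric.ball (0:ℝ) x ∈ 𝓝 (0:ℝ) := Metric.ball_mem_nhds _ hx0
      filter_upwards [mem_nhdsWithin_of_mem_nhds hmem, self_mem_nhdsWithin] with t htb hts
      have ht0 : 0 < t := lt_of_le_of_ne hts.1.1 (Ne.symm hts.2)
      have htx : t ≤ x := by
        have : |t| < x := by simpa [Real.dist_eq] using htb
        rw [abs_of_pos ht0] at this
        exact this.le
      have hslope : slope bu 0 t = bu t / t := by
        rw [slope_def_field]
        rw [hbu0]
        simp
      rw [hslope]
      rcases eq_or_lt_of_le htx with rfl | htlt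
      · exact le_rfl
      · -- convexity: bu t ≤ (t/x) * bu x
        have hcomb := hconv.2 (show (0:ℝ) ∈ Icc (0:ℝ) a from ⟨le_rfl, ha.le⟩) hx
          (show (0:ℝ) ≤ 1 - t / x by
            have : t / x < 1 := (div_lt_one hx0).mpr htlt
            linarith)
          (show (0:ℝ) ≤ t / x by positivity)
          (by ring)
        simp only [smul_eq_mul, mul_zero, zero_add] at hcomb
        have hbt : bu t ≤ (t / x) * bu x := by
          have harg : (t / x) * x = t := div_mul_cancel₀ t (ne_of_gt hx0)
          rw [harg] at hcomb
          rw [hbu0] at hcomb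
          linarith [hcomb]
        rw [div_le_div_iff₀ ht0 hx0]
        calc bu t * x ≤ ((t / x) * bu x) * x := by nlinarith
          _ = bu x * t := by field_simp
    have := le_of_tendsto hder hev
    linarith
  -- choose h small enough that f₀ along bl is ≥ -τ/2
  have hψ : ContinuousWithinAt (fun t => f₀ (t, bl t)) (Icc (0:ℝ) a) 0 := by
    apply ContinuousOn.continuousWithinAt _ (show (0:ℝ) ∈ Icc (0:ℝ) a from ⟨le_rfl, ha.le⟩)
    apply hf.comp (continuousOn_id.prodMk hblc)
    intro t ht
    rcases eq_or_lt_of_le ht.1 with rfl | ht0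
    · right; simp only [id_eq, hbl0]; exact hO
    · right; exact hcurvel t ⟨ht0, ht.2⟩
  obtain ⟨δ, hδ, hδp⟩ := Metric.continuousWithinAt_iff.mp hψ (τ / 2) (by positivity)
  set h : ℝ := min c (δ / 2) with hhdef
  have hh0 : 0 < h := lt_min hc.1 (by positivity)
  have hhc : h ≤ c := min_le_left _ _
  have hha : h ≤ a := hhc.trans hc.2
  have hτbl : ∀ t ∈ Icc (0:ℝ) h, -(τ / 2) ≤ f₀ (t, bl t) := by
    intro t ht
    have htIcc : t ∈ Icc (0:ℝ) a := ⟨ht.1, ht.2.trans hha⟩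
    have hdist : dist t 0 < δ := by
      rw [Real.dist_eq, sub_zero, abs_of_nonneg ht.1]
      calc t ≤ h := ht.2
        _ ≤ δ / 2 := min_le_right _ _
        _ < δ := by linarith
    have := hδp htIcc hdist
    rw [Real.dist_eq] at this
    have h00 : f₀ ((0:ℝ), bl 0) = 0 := by rw [hbl0, hf0]
    rw [h00, sub_zero, abs_lt] at this
    linarith [this.1]
  -- the clamped projection
  set X : ℝ → ℝ := fun t => max 0 (min t h) with hXdef
  have hXcont : Continuous X := continuous_const.max (continuous_id.min continuous_const)
  have hXmem : ∀ t, X t ∈ Icc (0:ℝ) h :=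
    fun t => ⟨le_max_left _ _, max_le hh0.le (min_le_right _ _)⟩
  have hXmemA : ∀ t, X t ∈ Icc (0:ℝ) a := fun t => ⟨(hXmem t).1, (hXmem t).2.trans hha⟩
  have hXid : ∀ t ∈ Icc (0:ℝ) h, X t = t := by
    intro t ht
    simp only [hXdef]
    rw [min_eq_left ht.2, max_eq_right ht.1]
  set bls : ℝ → ℝ := fun t => bl (X t) with hblsdef
  set bus : ℝ → ℝ := fun t => bu (X t) with hbusdef
  have hblscont : Continuous bls := hblc.comp_continuous hXcont hXmemA
  have hbuscont : Continuous bus := hbuc.comp_continuous hXcont hXmemA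
  have hblsle : ∀ t, bls t ≤ 0 := fun t => hbl_nonpos _ (hXmemA t)
  have hbusge : ∀ t, 0 ≤ bus t := fun t => hbu_nonneg _ (hXmemA t)
  have horder : ∀ t, bls t ≤ bus t := fun t => (hblsle t).trans (hbusge t)
  set Y : ℝ × ℝ → ℝ := fun p => max (bls p.1) (min p.2 (bus p.1)) with hYdef
  have hYcont : Continuous Y :=
    (hblscont.comp continuous_fst).max (continuous_snd.min (hbuscont.comp continuous_fst))
  have hYmem : ∀ p, Y p ∈ Icc (bls p.1) (bus p.1) := by
    intro p
    exact ⟨le_max_left _ _, max_le (horder p.1) (min_le_right _ _)⟩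
  set π : ℝ × ℝ → ℝ × ℝ := fun p => (X p.1, Y p) with hπdef
  have hπcont : Continuous π := hXcont.comp continuous_fst |>.prodMk hYcont
  -- the compact region S
  set S : Set (ℝ × ℝ) := {p | p.1 ∈ Icc (0:ℝ) h ∧ p.2 ∈ Icc (bls p.1) (bus p.1)} with hSdef
  have hXX : ∀ t, X (X t) = X t := fun t => hXid _ (hXmem t)
  have hπS : ∀ p, π p ∈ S := by
    intro p
    refine ⟨hXmem p.1, ?_⟩
    have h1 : bls (X p.1) = bls p.1 := by simp only [hblsdef, hXX]
    have h2 : bus (X p.1) = bus p.1 := by simp only [hbusdef, hXX]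
    rw [h1, h2]
    exact hYmem p
  have hSsub : S ⊆ G ∪ Ghat := by
    rintro ⟨x, y⟩ ⟨hx, hy⟩
    have hXx : X x = x := hXid x hx
    rw [hblsdef] at hy
    simp only [hXx] at hy
    rcases eq_or_lt_of_le hx.1 with rfl | hx0
    · have : y = 0 := by
        have h1 := hy.1
        have h2 := hy.2
        simp only [hbusdef, hXx] at h2
        rw [hbl0] at h1
        rw [hbu0] at h2
        linarith
      rw [this]
      exact Or.inr hO
    · have hxa : x ∈ Ioc (0:ℝ) a := ⟨hx0, hx.2.trans hha⟩
      have hy2 : y ≤ bu x := by have := hy.2; simpa [hbusdef, hXx] using this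
      rcases eq_or_lt_of_le hy.1 with heq | hlt
      · rw [← heq]; exact Or.inr (hcurvel x hxa)
      rcases eq_or_lt_of_le hy2 with heq2 | hlt2
      · rw [heq2]; exact Or.inr (hcurveu x hxa)
      · exact Or.inl (hin x y hx0 (hx.2.trans hhc) hlt hlt2)
  have hSclosed : IsClosed S := by
    have h1 : IsClosed {p : ℝ × ℝ | p.1 ∈ Icc (0:ℝ) h} := isClosed_Icc.preimage continuous_fst
    have h2 : IsClosed {p : ℝ × ℝ | bls p.1 ≤ p.2} :=
      isClosed_le (hblscont.comp continuous_fst) continuous_snd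
    have h3 : IsClosed {p : ℝ × ℝ | p.2 ≤ bus p.1} :=
      isClosed_le continuous_snd (hbuscont.comp continuous_fst)
    have : S = {p : ℝ × ℝ | p.1 ∈ Icc (0:ℝ) h} ∩
        ({p : ℝ × ℝ | bls p.1 ≤ p.2} ∩ {p : ℝ × ℝ | p.2 ≤ bus p.1}) := by
      ext p
      constructor
      · rintro ⟨h1, h2⟩; exact ⟨h1, h2.1, h2.2⟩
      · rintro ⟨h1, h2, h3⟩; exact ⟨h1, h2, h3⟩
    rw [this]
    exact h1.inter (h2.inter h3)
  have hScomp : IsCompact S := by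
    obtain ⟨z₁, _, hz₁⟩ := isCompact_Icc.exists_isMinOn (nonempty_Icc.mpr hh0.le)
      (hblc.mono (Icc_subset_Icc le_rfl hha))
    obtain ⟨z₂, _, hz₂⟩ := isCompact_Icc.exists_isMaxOn (nonempty_Icc.mpr hh0.le)
      (hbuc.mono (Icc_subset_Icc le_rfl hha))
    apply (isCompact_Icc.prod (isCompact_Icc (a := bl z₁) (b := bu z₂))).of_isClosed_subset
      hSclosed
    rintro ⟨x, y⟩ ⟨hx, hy⟩
    refine ⟨hx, ?_, ?_⟩
    · exact (hz₁ (hXmem x)).trans hy.1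
    · exact hy.2.trans (hz₂ (hXmem x))
  have hSne : S.Nonempty := by
    refine ⟨((0:ℝ), (0:ℝ)), ⟨le_rfl, hh0.le⟩, ?_⟩
    have hX0 : X 0 = 0 := hXid 0 ⟨le_rfl, hh0.le⟩
    constructor <;> simp [hblsdef, hbusdef, hX0, hbl0, hbu0]
  -- bound for f₀ on S and the extended field F
  obtain ⟨pM, hpMS, hpM⟩ := hScomp.exists_isMaxOn hSne ((hf.mono hSsub).abs)
  set M : ℝ := |f₀ pM| with hMdef
  set F : ℝ × ℝ → ℝ := fun p => f₀ (π p) with hFdef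
  have hFc : Continuous F := hf.comp_continuous hπcont (fun p => hSsub (hπS p))
  have hFb : ∀ p, |F p| ≤ M := fun p => hpM (hπS p)
  -- Peano existence
  obtain ⟨φ, hφ0, hφd⟩ := peano_Icc hh0 hFc hFb
  have hφcont : ContinuousOn φ (Icc (0:ℝ) h) := fun t ht => (hφd t ht).continuousWithinAt
  have hφdAt : ∀ t ∈ Ioo (0:ℝ) h, HasDerivAt φ (F (t, φ t)) t := fun t ht =>
    (hφd t ⟨ht.1.le, ht.2.le⟩).hasDerivAt (Icc_mem_nhds ht.1 ht.2)
  have hbuAt : ∀ t ∈ Ioo (0:ℝ) h, HasDerivAt bu (bu' t) t := fun t ht =>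
    (hderivu t ⟨ht.1.le, (ht.2.trans_le hha).le⟩).hasDerivAt
      (Icc_mem_nhds ht.1 (ht.2.trans_le hha))
  have hblAt : ∀ t ∈ Ioo (0:ℝ) h, HasDerivAt bl (bl' t) t := fun t ht =>
    (hderivl t ⟨ht.1.le, (ht.2.trans_le hha).le⟩).hasDerivAt
      (Icc_mem_nhds ht.1 (ht.2.trans_le hha))
  -- upper barrier
  have hupper : ∀ t ∈ Icc (0:ℝ) h, φ t ≤ bu t := by
    have := barrier_le (f := fun t => φ t - bu t) (f' := fun t => F (t, φ t) - bu' t) (h := h)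
      (hφcont.sub (hbuc.mono (Icc_subset_Icc le_rfl hha)))
      (fun t ht => (hφdAt t ht).sub (hbuAt t ht))
      (by simp [hφ0, hbu0])
      ?_
    · intro t ht
      have h9 : φ t - bu t ≤ 0 := this t ht
      linarith
    · intro t ht hge
      have hge' : (0:ℝ) ≤ φ t - bu t := hge
      show F (t, φ t) - bu' t ≤ 0
      have htIcc : t ∈ Icc (0:ℝ) h := ⟨ht.1.le, ht.2.le⟩
      have htA : t ∈ Icc (0:ℝ) a := ⟨ht.1.le, (ht.2.trans_le hha).le⟩
      have hXt : X t = t := hXid t htIcc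
      have hbul : bu t ≤ φ t := by linarith
      have hπval : π (t, φ t) = (t, bu t) := by
        simp only [hπdef, hYdef, hblsdef, hbusdef]
        rw [hXt]
        rw [min_eq_right hbul, max_eq_right ((hbl_nonpos t htA).trans (hbu_nonneg t htA))]
      have hFval : F (t, φ t) = f₀ (t, bu t) := by
        simp only [hFdef]
        rw [hπval]
      rw [hFval]
      have := hbcu t ⟨ht.1, (ht.2.le.trans hha)⟩
      linarith
  -- lower barrier
  have hlower : ∀ t ∈ Icc (0:ℝ) h, bl t ≤ φ t := by
    have := barrier_le (f := fun t => bl t - φ t) (f' := fun t => bl' t - F (t, φ t)) (h := h)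
      ((hblc.mono (Icc_subset_Icc le_rfl hha)).sub hφcont)
      (fun t ht => (hblAt t ht).sub (hφdAt t ht))
      (by simp [hφ0, hbl0])
      ?_
    · intro t ht
      have h9 : bl t - φ t ≤ 0 := this t ht
      linarith
    · intro t ht hge
      have hge' : (0:ℝ) ≤ bl t - φ t := hge
      show bl' t - F (t, φ t) ≤ 0
      have htIcc : t ∈ Icc (0:ℝ) h := ⟨ht.1.le, ht.2.le⟩
      have htA : t ∈ Icc (0:ℝ) a := ⟨ht.1.le, (ht.2.trans_le hha).le⟩
      have hXt : X t = t := hXid t htIcc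
      have hφle : φ t ≤ bl t := by linarith
      have hπval : π (t, φ t) = (t, bl t) := by
        simp only [hπdef, hYdef, hblsdef, hbusdef]
        rw [hXt]
        rw [min_eq_left (hφle.trans ((hbl_nonpos t htA).trans (hbu_nonneg t htA))),
          max_eq_left hφle]
      have hFval : F (t, φ t) = f₀ (t, bl t) := by
        simp only [hFdef]
        rw [hπval]
      rw [hFval]
      have h1 := hbl'τ t htA
      have h2 := hτbl t htIcc
      linarith
  -- conclusion
  refine ⟨h, ⟨hh0, hhc⟩, φ, hφ0, fun x hx => ?_⟩
  have hXx : X x = x := hXid x hx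
  have hπid : π (x, φ x) = (x, φ x) := by
    simp only [hπdef, hYdef, hblsdef, hbusdef]
    rw [hXx]
    rw [min_eq_left (hupper x hx), max_eq_right (hlower x hx)]
  constructor
  · apply hSsub
    refine ⟨hx, ?_, ?_⟩
    · simp only [hblsdef]; rw [hXx]; exact hlower x hx
    · simp only [hbusdef]; rw [hXx]; exact hupper x hx
  · have hder := hφd x hx
    have : F (x, φ x) = f₀ (x, φ x) := by
      simp only [hFdef]
      rw [hπid]
    rwa [this] at hder
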